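/- The vectors v^{(ℓ)} = e_1 − e_{ℓ+1} for ℓ = 1,…,t form a basis of the kernel of M = S^{t+1} + b S^{t+2} + δ J when δ ≠ 0. -/
import Mathlib


open Matrix Finset

/-- The n×n shift matrix with ones on the superdiagonal. -/
def shiftMat (n : ℕ) : Matrix (Fin n) (Fin n) ℂ :=
  Matrix.of fun j k => if (k : ℕ) = (j : ℕ) + 1 then 1 else 0

/-- The matrix `M = S^{t+1} + b S^{t+2} + δ J` of the dynamical system. -/
noncomputable def modelMat (n t : ℕ) (b δ : ℂ) : Matrix (Fin n) (Fin n) ℂ :=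
  (shiftMat n) ^ (t + 1) + b • (shiftMat n) ^ (t + 2) + δ • Matrix.of fun _ _ => (1 : ℂ)

/-- The standard basis vector `e_{i+1}` of `ℂ^n`, indexed by `i : ℕ` (zero-based). -/
def stdVec (n : ℕ) (i : ℕ) : Fin n → ℂ := fun j => if (j : ℕ) = i then 1 else 0

lemma shift_pow_apply (n p : ℕ) (j k : Fin n) :
    ((shiftMat n) ^ p) j k = if (k : ℕ) = (j : ℕ) + p then 1 else 0 := by
  induction p generalizing k with
  | zero => simp [Matrix.one_apply, Fin.ext_iff, eq_comm]
  | succ p ih =>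
    rw [pow_succ, Matrix.mul_apply]
    simp only [ih]
    simp only [shiftMat, Matrix.of_apply, ite_mul, one_mul, zero_mul]
    by_cases h : (j : ℕ) + p < n
    · rw [Finset.sum_eq_single (⟨(j:ℕ)+p, h⟩ : Fin n)]
      · simp [← add_assoc]
      · intro m _ hm
        rw [if_neg]
        simpa [Fin.ext_iff] using hm
      · simp
    · rw [Finset.sum_eq_zero, if_neg]
      · have := k.isLt; omega
      · intro m _
        rw [if_neg]
        have := m.isLt; omega

lemma shift_pow_mulVec (n p : ℕ) (x : Fin n → ℂ) (j : Fin n) :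
    ((shiftMat n ^ p).mulVec x) j = if h : (j : ℕ) + p < n then x ⟨(j:ℕ)+p, h⟩ else 0 := by
  simp only [Matrix.mulVec, dotProduct, shift_pow_apply, ite_mul, one_mul, zero_mul]
  split
  · next h =>
    rw [Finset.sum_eq_single (⟨(j:ℕ)+p, h⟩ : Fin n)]
    · simp
    · intro m _ hm
      rw [if_neg]
      simpa [Fin.ext_iff] using hm
    · simp
  · next h =>
    refine Finset.sum_eq_zero fun m _ => ?_
    rw [if_neg]
    have := m.isLt; omega

lemma modelMat_mulVec (n t : ℕ) (b δ : ℂ) (x : Fin n → ℂ) (j : Fin n) :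
    (modelMat n t b δ).mulVec x j =
      (if h : (j : ℕ) + (t+1) < n then x ⟨(j:ℕ)+(t+1), h⟩ else 0)
      + b * (if h : (j : ℕ) + (t+2) < n then x ⟨(j:ℕ)+(t+2), h⟩ else 0)
      + δ * ∑ k, x k := by
  simp only [modelMat, Matrix.add_mulVec, Matrix.smul_mulVec, Pi.add_apply,
    Pi.smul_apply, smul_eq_mul, shift_pow_mulVec]
  congr 2
  simp [Matrix.mulVec, dotProduct]

lemma mem_ker_iff (n t : ℕ) (ht2 : t + 2 ≤ n) (b δ : ℂ) (hδ : δ ≠ 0) (x : Fin n → ℂ) :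
    (modelMat n t b δ).mulVec x = 0 ↔
      (∑ k, x k = 0 ∧ ∀ k : Fin n, t + 1 ≤ (k : ℕ) → x k = 0) := by
  constructor
  · intro hx
    have hrow : ∀ j : Fin n, (if h : (j : ℕ) + (t+1) < n then x ⟨(j:ℕ)+(t+1), h⟩ else 0)
      + b * (if h : (j : ℕ) + (t+2) < n then x ⟨(j:ℕ)+(t+2), h⟩ else 0)
      + δ * ∑ k, x k = 0 := by
      intro j
      rw [← modelMat_mulVec, hx]
      rfl
    have hlast : ∑ k, x k = 0 := by
      have h := hrow ⟨n-1, by omega⟩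
      rw [dif_neg (by simp; omega), dif_neg (by simp; omega)] at h
      simpa [hδ] using h
    refine ⟨hlast, ?_⟩
    have key : ∀ d : ℕ, ∀ k : Fin n, (k : ℕ) + d + 1 = n → t + 1 ≤ (k : ℕ) → x k = 0 := by
      intro d
      induction d with
      | zero =>
        intro k hk htk
        have h := hrow ⟨(k : ℕ) - (t+1), by omega⟩
        rw [hlast, dif_pos (by simp; omega), dif_neg (by simp; omega)] at h
        have hcast : ((⟨(k : ℕ) - (t+1), by omega⟩ : Fin n) : ℕ) + (t+1) = (k : ℕ) := by
          simp; omega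
        simpa [show (⟨((⟨(k : ℕ) - (t+1), by omega⟩ : Fin n) : ℕ) + (t+1), by simp; omega⟩ : Fin n) = k
          from Fin.ext (by simp; omega)] using h
      | succ d ih =>
        intro k hk htk
        have h := hrow ⟨(k : ℕ) - (t+1), by omega⟩
        rw [hlast, dif_pos (by simp; omega), dif_pos (by simp; omega)] at h
        have h1 : (⟨((⟨(k : ℕ) - (t+1), by omega⟩ : Fin n) : ℕ) + (t+1), by simp; omega⟩ : Fin n) = k :=
          Fin.ext (by simp; omega)
        have h2 : x (⟨((⟨(k : ℕ) - (t+1), by omega⟩ : Fin n) : ℕ) + (t+2), by simp; omega⟩ : Fin n) = 0 :=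
          ih _ (by simp; omega) (by simp; omega)
        rw [h1, h2] at h
        simpa using h
    intro k htk
    exact key (n - 1 - (k : ℕ)) k (by have := k.isLt; omega) htk
  · rintro ⟨hsum, hzero⟩
    funext j
    rw [modelMat_mulVec, hsum, mul_zero, add_zero]
    have e1 : (if h : (j : ℕ) + (t+1) < n then x ⟨(j:ℕ)+(t+1), h⟩ else 0) = 0 := by
      split
      · exact hzero _ (by simp only [Fin.val_mk]; omega)
      · rfl
    have e2 : (if h : (j : ℕ) + (t+2) < n then x ⟨(j:ℕ)+(t+2), h⟩ else 0) = 0 := by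
      split
      · exact hzero _ (by simp only [Fin.val_mk]; omega)
      · rfl
    rw [e1, e2, mul_zero, add_zero]
    rfl

lemma sum_stdVec (n i : ℕ) (h : i < n) : ∑ k, stdVec n i k = 1 := by
  rw [Finset.sum_eq_single (⟨i, h⟩ : Fin n)]
  · simp [stdVec]
  · intro m _ hm
    simp only [stdVec]
    rw [if_neg]
    simpa [Fin.ext_iff] using hm
  · simp

lemma sum_tail (n t : ℕ) (h : t + 1 ≤ n) (x : Fin n → ℂ)
    (hzero : ∀ k : Fin n, t + 1 ≤ (k : ℕ) → x k = 0) :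
    ∑ k, x k = x ⟨0, by omega⟩ + ∑ ℓ : Fin t, x ⟨(ℓ : ℕ) + 1, by have := ℓ.isLt; omega⟩ := by
  have e1 : ∑ k, x k = ∑ k ∈ Finset.univ.map (Fin.castLEEmb h), x k := by
    refine (Finset.sum_subset (Finset.subset_univ _) fun k _ hk => hzero k ?_).symm
    by_contra hc
    exact hk (Finset.mem_map.2 ⟨⟨(k : ℕ), by omega⟩, Finset.mem_univ _, Fin.ext rfl⟩)
  have h0 : (Fin.castLEEmb h) 0 = (⟨0, by omega⟩ : Fin n) := Fin.ext (by simp)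
  rw [e1, Finset.sum_map, Fin.sum_univ_succ, h0]
  exact congrArg _ (Finset.sum_congr rfl fun ℓ _ => congrArg x (Fin.ext (by simp)))

/-- The vectors `v^{(ℓ)} = e₁ − e_{ℓ+1}`, `ℓ = 1, …, t`, form a basis of
`ker (S^{t+1} + b S^{t+2} + δ J)` when `δ ≠ 0`. -/
theorem modelMat_ker_basis (n t : ℕ) (hn : 2 ≤ n) (ht1 : 1 ≤ t) (ht2 : t ≤ n - 2)
    (b δ : ℂ) (hδ : δ ≠ 0) :
    LinearIndependent ℂ (fun ℓ : Fin t => stdVec n 0 - stdVec n ((ℓ : ℕ) + 1)) ∧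
    Submodule.span ℂ (Set.range (fun ℓ : Fin t => stdVec n 0 - stdVec n ((ℓ : ℕ) + 1)))
      = LinearMap.ker (modelMat n t b δ).mulVecLin := by
  have htn : t + 2 ≤ n := by omega
  constructor
  · rw [Fintype.linearIndependent_iff]
    intro g hg ℓ0
    have hlt : (ℓ0 : ℕ) + 1 < n := by have := ℓ0.isLt; omega
    have h := congrFun hg ⟨(ℓ0 : ℕ) + 1, hlt⟩
    simp only [Finset.sum_apply, Pi.smul_apply, Pi.sub_apply, stdVec, smul_eq_mul,
      Pi.zero_apply, Fin.val_mk] at h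
    have hcond : ∀ ℓ : Fin t, ((ℓ0 : ℕ) + 1 = (ℓ : ℕ) + 1) = (ℓ = ℓ0) := fun ℓ => by
      simp [Fin.ext_iff, eq_comm]
    simp only [hcond, Nat.succ_ne_zero, if_false, Finset.sum_ite_eq',
      Finset.mem_univ, if_true] at h
    rw [Finset.sum_congr rfl (fun m _ => show g m * (0 - if m = ℓ0 then (1:ℂ) else 0)
        = if m = ℓ0 then -g m else 0 by split <;> ring)] at h
    rw [Finset.sum_ite_eq' Finset.univ, if_pos (Finset.mem_univ _)] at h
    exact neg_eq_zero.mp h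
  · apply le_antisymm
    · rw [Submodule.span_le]
      rintro v ⟨ℓ, rfl⟩
      rw [SetLike.mem_coe, LinearMap.mem_ker, Matrix.mulVecLin_apply]
      rw [mem_ker_iff n t htn b δ hδ]
      constructor
      · simp only [Pi.sub_apply]
        rw [Finset.sum_sub_distrib, sum_stdVec n 0 (by omega),
          sum_stdVec n ((ℓ : ℕ) + 1) (by have := ℓ.isLt; omega), sub_self]
      · intro k hk
        have := ℓ.isLt
        simp only [Pi.sub_apply, stdVec]
        rw [if_neg (by omega), if_neg (by omega), sub_self]
    · intro x hx
      rw [LinearMap.mem_ker, Matrix.mulVecLin_apply, mem_ker_iff n t htn b δ hδ] at hx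
      obtain ⟨hsum, hzero⟩ := hx
      have hrepr : x = ∑ ℓ : Fin t,
          (-(x ⟨(ℓ : ℕ) + 1, by have := ℓ.isLt; omega⟩)) •
            (stdVec n 0 - stdVec n ((ℓ : ℕ) + 1)) := by
        funext k
        simp only [Finset.sum_apply, Pi.smul_apply, Pi.sub_apply, stdVec, smul_eq_mul]
        rcases Nat.lt_or_ge (k : ℕ) (t + 1) with hk | hk
        · rcases Nat.eq_zero_or_pos (k : ℕ) with hk0 | hkpos
          · have hterm : ∀ ℓ : Fin t,
                (-(x ⟨(ℓ : ℕ) + 1, by have := ℓ.isLt; omega⟩)) *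
                  ((if (k : ℕ) = 0 then (1:ℂ) else 0) - (if (k : ℕ) = (ℓ : ℕ) + 1 then 1 else 0))
                = -(x ⟨(ℓ : ℕ) + 1, by have := ℓ.isLt; omega⟩) := by
              intro ℓ
              rw [if_pos hk0, if_neg (by omega)]
              ring
            rw [Finset.sum_congr rfl fun ℓ _ => hterm ℓ]
            have := sum_tail n t (by omega) x hzero
            rw [hsum] at this
            have hk' : k = ⟨0, by omega⟩ := Fin.ext hk0
            rw [hk']
            rw [Finset.sum_neg_distrib]
            linear_combination -this
          · set ℓ0 : Fin t := ⟨(k : ℕ) - 1, by omega⟩ with hℓ0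
            have hterm : ∀ ℓ : Fin t,
                (-(x ⟨(ℓ : ℕ) + 1, by have := ℓ.isLt; omega⟩)) *
                  ((if (k : ℕ) = 0 then (1:ℂ) else 0) - (if (k : ℕ) = (ℓ : ℕ) + 1 then 1 else 0))
                = if ℓ = ℓ0 then x ⟨(ℓ : ℕ) + 1, by have := ℓ.isLt; omega⟩ else 0 := by
              intro ℓ
              rw [if_neg (by omega)]
              by_cases hℓ : ℓ = ℓ0
              · rw [if_pos (by simp [hℓ, hℓ0]; omega), if_pos hℓ]
                ring
              · rw [if_neg, if_neg hℓ]
                · ring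
                · simp only [hℓ0, Fin.ext_iff] at hℓ ⊢
                  omega
            rw [Finset.sum_congr rfl fun ℓ _ => hterm ℓ, Finset.sum_ite_eq' Finset.univ,
              if_pos (Finset.mem_univ _)]
            congr 1
            exact Fin.ext (by simp [hℓ0]; omega)
        · have hterm : ∀ ℓ : Fin t,
              (-(x ⟨(ℓ : ℕ) + 1, by have := ℓ.isLt; omega⟩)) *
                ((if (k : ℕ) = 0 then (1:ℂ) else 0) - (if (k : ℕ) = (ℓ : ℕ) + 1 then 1 else 0))
              = 0 := by
            intro ℓ
            have := ℓ.isLt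
            rw [if_neg (by omega), if_neg (by omega)]
            ring
          rw [Finset.sum_congr rfl fun ℓ _ => hterm ℓ, Finset.sum_const, smul_zero]
          exact hzero k hk
      rw [hrepr]
      exact Submodule.sum_mem _ fun ℓ _ =>
        Submodule.smul_mem _ _ (Submodule.subset_span ⟨ℓ, rfl⟩)
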